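/- Let f be a nonzero homogeneous Darboux polynomial of degree m of the three-dimensional Lotka–Volterra system with cofactor α·x1 + β·x2 + γ·x3. Then either α = 0 or α = −α1·r − α2·s for some non-negative integers α1, α2 with 1 ≤ α1 + α2 ≤ m; similarly, either β = 0 or β = β1·r − β2·t for some non-negative integers β1, β2 with 1 ≤ β1 + β2 ≤ m. -/

import Mathlib

open MvPolynomial

set_option maxHeartbeats 1000000

/-- Lie derivative along the 3D Lotka-Volterra vector field with parameters r, s, t. -/
noncomputable def LV (r s t : ℝ) (f : MvPolynomial (Fin 3) ℝ) : MvPolynomial (Fin 3) ℝ :=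
  X 0 * (C r * X 1 + C s * X 2) * pderiv 0 f
  + X 1 * (C (-r) * X 0 + C t * X 2) * pderiv 1 f
  + X 2 * (C (-s) * X 0 + C (-t) * X 1) * pderiv 2 f


lemma coeff_pderiv' {σ : Type*} [DecidableEq σ] (k : σ) (g : MvPolynomial σ ℝ) (ν : σ →₀ ℕ) :
    coeff ν (pderiv k g) = (ν k + 1) * coeff (ν + Finsupp.single k 1) g := by
  induction g using MvPolynomial.induction_on' with
  | monomial s a =>
    rw [pderiv_monomial, coeff_monomial, coeff_monomial]
    by_cases hs : s = ν + Finsupp.single k 1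
    · subst hs
      rw [if_pos (add_tsub_cancel_right ν (Finsupp.single k 1)), if_pos rfl]
      simp [Finsupp.add_apply, Finsupp.single_apply, mul_comm]
    · rw [if_neg hs]
      by_cases h2 : s - Finsupp.single k 1 = ν
      · rw [if_pos h2]
        have hk : s k = 0 := by
          by_contra hk0
          apply hs
          ext x
          have h2x := DFunLike.congr_fun h2 x
          simp only [Finsupp.tsub_apply] at h2x
          by_cases hx : x = k
          · subst hx
            simp at h2x ⊢
            omega
          · simp [Finsupp.single_apply, Ne.symm hx] at h2x ⊢
            omega
        simp [hk]
      · simp [h2]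
  | add p q hp hq => simp [hp, hq, coeff_add, mul_add]

lemma coeff_XXp (i j k : Fin 3) (g : MvPolynomial (Fin 3) ℝ) (ν : Fin 3 →₀ ℕ) :
    coeff (ν + Finsupp.single i 1 + Finsupp.single j 1) (X i * X j * pderiv k g)
      = (ν k + 1) * coeff (ν + Finsupp.single k 1) g := by
  rw [mul_assoc, show ν + Finsupp.single i 1 + Finsupp.single j 1
      = Finsupp.single i 1 + (Finsupp.single j 1 + ν) by rw [add_comm ν, add_assoc, add_comm ν],
    coeff_X_mul, coeff_X_mul, coeff_pderiv']

lemma coeff_XX_zero {i j : Fin 3} (hij : i ≠ j) (g : MvPolynomial (Fin 3) ℝ) (μ : Fin 3 →₀ ℕ)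
    (h : μ i = 0 ∨ μ j = 0) : coeff μ (X i * X j * g) = 0 := by
  rw [mul_assoc, coeff_X_mul']
  rcases h with h | h
  · rw [if_neg (by simp [Finsupp.mem_support_iff, h])]
  · split
    · rw [coeff_X_mul', if_neg (by simp [Finsupp.mem_support_iff, Finsupp.tsub_apply,
        Finsupp.single_apply, hij.symm, h])]
    · rfl

lemma coeff_LV (r s t : ℝ) (f : MvPolynomial (Fin 3) ℝ) (μ : Fin 3 →₀ ℕ) :
    coeff μ (LV r s t f) =
      r * coeff μ (X 0 * X 1 * pderiv 0 f) + s * coeff μ (X 0 * X 2 * pderiv 0 f)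
      - r * coeff μ (X 0 * X 1 * pderiv 1 f) + t * coeff μ (X 1 * X 2 * pderiv 1 f)
      - s * coeff μ (X 0 * X 2 * pderiv 2 f) - t * coeff μ (X 1 * X 2 * pderiv 2 f) := by
  have h : LV r s t f = C r * (X 0 * X 1 * pderiv 0 f) + C s * (X 0 * X 2 * pderiv 0 f)
      + C (-r) * (X 0 * X 1 * pderiv 1 f) + C t * (X 1 * X 2 * pderiv 1 f)
      + C (-s) * (X 0 * X 2 * pderiv 2 f) + C (-t) * (X 1 * X 2 * pderiv 2 f) := by
    unfold LV; ring
  rw [h]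
  simp only [coeff_add, coeff_C_mul]
  ring

lemma deg3 (f : MvPolynomial (Fin 3) ℝ) (m : ℕ) (hhom : f.IsHomogeneous m)
    (d : Fin 3 →₀ ℕ) (hc : coeff d f ≠ 0) : d 0 + d 1 + d 2 = m := by
  have h := hhom hc
  rw [← h, Finsupp.weight_apply, Finsupp.sum_fintype _ _ (by simp), Fin.sum_univ_three]
  simp [mul_comm]

theorem stmt12 (r s t : ℝ) (m : ℕ) (f : MvPolynomial (Fin 3) ℝ)
    (hf : f ≠ 0) (hhom : f.IsHomogeneous m) (α β γ : ℝ)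
    (hD : LV r s t f = (C α * X 0 + C β * X 1 + C γ * X 2) * f) :
    (α = 0 ∨ ∃ α1 α2 : ℕ, α = -(α1 * r) - α2 * s ∧ 1 ≤ α1 + α2 ∧ α1 + α2 ≤ m)
    ∧ (β = 0 ∨ ∃ β1 β2 : ℕ, β = β1 * r - β2 * t ∧ 1 ≤ β1 + β2 ∧ β1 + β2 ≤ m) := by
  have hne : f.support.Nonempty := by rwa [MvPolynomial.support_nonempty]
  have hDrw : (C α * X 0 + C β * X 1 + C γ * X 2) * f
      = C α * (X 0 * f) + C β * (X 1 * f) + C γ * (X 2 * f) := by ring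
  constructor
  · -- α part : maximize coordinate 0
    obtain ⟨d, hdmem, hmaxd⟩ := f.support.exists_max_image (fun ν => ν 0) hne
    have hc : coeff d f ≠ 0 := MvPolynomial.mem_support_iff.mp hdmem
    have hz : ∀ ν : Fin 3 →₀ ℕ, d 0 < ν 0 → coeff ν f = 0 := by
      intro ν h
      by_contra hne2
      exact absurd (hmaxd ν (MvPolynomial.mem_support_iff.mpr hne2)) (by omega)
    have hdeg : d 0 + d 1 + d 2 = m := deg3 f m hhom d hc
    have heq := congrArg (MvPolynomial.coeff (d + Finsupp.single 0 1)) hD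
    rw [coeff_LV, hDrw] at heq
    simp only [coeff_add, coeff_C_mul] at heq
    have hT1 : coeff (d + Finsupp.single 0 1) (X 0 * X 1 * pderiv 0 f) = 0 := by
      by_cases hb : d 1 = 0
      · exact coeff_XX_zero (by decide) _ _ (Or.inr (by simp [Finsupp.single_apply, hb]))
      · rw [show d + Finsupp.single (0:Fin 3) 1
            = (d - Finsupp.single 1 1) + Finsupp.single 0 1 + Finsupp.single 1 1 by
            ext x; fin_cases x <;> simp [Finsupp.single_apply, Finsupp.tsub_apply] <;> omega,
          coeff_XXp,
          hz (d - Finsupp.single 1 1 + Finsupp.single 0 1)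
            (by simp [Finsupp.tsub_apply, Finsupp.single_apply] <;> omega), mul_zero]
    have hT2 : coeff (d + Finsupp.single 0 1) (X 0 * X 2 * pderiv 0 f) = 0 := by
      by_cases hb : d 2 = 0
      · exact coeff_XX_zero (by decide) _ _ (Or.inr (by simp [Finsupp.single_apply, hb]))
      · rw [show d + Finsupp.single (0:Fin 3) 1
            = (d - Finsupp.single 2 1) + Finsupp.single 0 1 + Finsupp.single 2 1 by
            ext x; fin_cases x <;> simp [Finsupp.single_apply, Finsupp.tsub_apply] <;> omega,
          coeff_XXp,
          hz (d - Finsupp.single 2 1 + Finsupp.single 0 1)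
            (by simp [Finsupp.tsub_apply, Finsupp.single_apply] <;> omega), mul_zero]
    have hT3 : coeff (d + Finsupp.single 0 1) (X 0 * X 1 * pderiv 1 f)
        = (d 1 : ℝ) * coeff d f := by
      by_cases hb : d 1 = 0
      · rw [coeff_XX_zero (by decide) _ _ (Or.inr (by simp [Finsupp.single_apply, hb]))]
        simp [hb]
      · rw [show d + Finsupp.single (0:Fin 3) 1
            = (d - Finsupp.single 1 1) + Finsupp.single 0 1 + Finsupp.single 1 1 by
            ext x; fin_cases x <;> simp [Finsupp.single_apply, Finsupp.tsub_apply] <;> omega,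
          coeff_XXp, tsub_add_cancel_of_le (Finsupp.single_le_iff.mpr (by omega))]
        congr 1
        have h1' : (d - Finsupp.single 1 1 : Fin 3 →₀ ℕ) 1 = d 1 - 1 := by
          simp [Finsupp.tsub_apply, Finsupp.single_apply]
        rw [h1']
        have : d 1 - 1 + 1 = d 1 := by omega
        exact_mod_cast congrArg (Nat.cast (R := ℝ)) this
    have hT4 : coeff (d + Finsupp.single 0 1) (X 1 * X 2 * pderiv 1 f) = 0 := by
      by_cases hb : d 1 = 0
      · exact coeff_XX_zero (by decide) _ _ (Or.inl (by simp [Finsupp.single_apply, hb]))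
      · by_cases hb2 : d 2 = 0
        · exact coeff_XX_zero (by decide) _ _ (Or.inr (by simp [Finsupp.single_apply, hb2]))
        · rw [show d + Finsupp.single (0:Fin 3) 1
              = (d - Finsupp.single 1 1 - Finsupp.single 2 1 + Finsupp.single 0 1)
                + Finsupp.single 1 1 + Finsupp.single 2 1 by
              ext x; fin_cases x <;> simp [Finsupp.single_apply, Finsupp.tsub_apply] <;> omega,
            coeff_XXp,
            hz (d - Finsupp.single 1 1 - Finsupp.single 2 1 + Finsupp.single 0 1
                + Finsupp.single 1 1)
              (by simp [Finsupp.tsub_apply, Finsupp.single_apply] <;> omega), mul_zero]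
    have hT5 : coeff (d + Finsupp.single 0 1) (X 0 * X 2 * pderiv 2 f)
        = (d 2 : ℝ) * coeff d f := by
      by_cases hb : d 2 = 0
      · rw [coeff_XX_zero (by decide) _ _ (Or.inr (by simp [Finsupp.single_apply, hb]))]
        simp [hb]
      · rw [show d + Finsupp.single (0:Fin 3) 1
            = (d - Finsupp.single 2 1) + Finsupp.single 0 1 + Finsupp.single 2 1 by
            ext x; fin_cases x <;> simp [Finsupp.single_apply, Finsupp.tsub_apply] <;> omega,
          coeff_XXp, tsub_add_cancel_of_le (Finsupp.single_le_iff.mpr (by omega))]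
        congr 1
        have h1' : (d - Finsupp.single 2 1 : Fin 3 →₀ ℕ) 2 = d 2 - 1 := by
          simp [Finsupp.tsub_apply, Finsupp.single_apply]
        rw [h1']
        have : d 2 - 1 + 1 = d 2 := by omega
        exact_mod_cast congrArg (Nat.cast (R := ℝ)) this
    have hT6 : coeff (d + Finsupp.single 0 1) (X 1 * X 2 * pderiv 2 f) = 0 := by
      by_cases hb : d 1 = 0
      · exact coeff_XX_zero (by decide) _ _ (Or.inl (by simp [Finsupp.single_apply, hb]))
      · by_cases hb2 : d 2 = 0
        · exact coeff_XX_zero (by decide) _ _ (Or.inr (by simp [Finsupp.single_apply, hb2]))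
        · rw [show d + Finsupp.single (0:Fin 3) 1
              = (d - Finsupp.single 1 1 - Finsupp.single 2 1 + Finsupp.single 0 1)
                + Finsupp.single 1 1 + Finsupp.single 2 1 by
              ext x; fin_cases x <;> simp [Finsupp.single_apply, Finsupp.tsub_apply] <;> omega,
            coeff_XXp,
            hz (d - Finsupp.single 1 1 - Finsupp.single 2 1 + Finsupp.single 0 1
                + Finsupp.single 2 1)
              (by simp [Finsupp.tsub_apply, Finsupp.single_apply] <;> omega), mul_zero]
    have hR0 : coeff (d + Finsupp.single 0 1) (X 0 * f) = coeff d f := by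
      rw [add_comm d, coeff_X_mul]
    have hR1 : coeff (d + Finsupp.single 0 1) (X 1 * f) = 0 := by
      rw [coeff_X_mul']
      split
      · exact hz _ (by simp [Finsupp.tsub_apply, Finsupp.single_apply] <;> omega)
      · rfl
    have hR2 : coeff (d + Finsupp.single 0 1) (X 2 * f) = 0 := by
      rw [coeff_X_mul']
      split
      · exact hz _ (by simp [Finsupp.tsub_apply, Finsupp.single_apply] <;> omega)
      · rfl
    rw [hT1, hT2, hT3, hT4, hT5, hT6, hR0, hR1, hR2] at heq
    have hα : α = -((d 1 : ℝ) * r) - (d 2 : ℝ) * s := by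
      apply mul_right_cancel₀ hc
      linear_combination -heq
    by_cases h0 : d 1 = 0 ∧ d 2 = 0
    · left; rw [hα, h0.1, h0.2]; simp
    · right; exact ⟨d 1, d 2, hα, by omega, by omega⟩
  · -- β part : maximize coordinate 1
    obtain ⟨d, hdmem, hmaxd⟩ := f.support.exists_max_image (fun ν => ν 1) hne
    have hc : coeff d f ≠ 0 := MvPolynomial.mem_support_iff.mp hdmem
    have hz : ∀ ν : Fin 3 →₀ ℕ, d 1 < ν 1 → coeff ν f = 0 := by
      intro ν h
      by_contra hne2
      exact absurd (hmaxd ν (MvPolynomial.mem_support_iff.mpr hne2)) (by omega)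
    have hdeg : d 0 + d 1 + d 2 = m := deg3 f m hhom d hc
    have heq := congrArg (MvPolynomial.coeff (d + Finsupp.single 1 1)) hD
    rw [coeff_LV, hDrw] at heq
    simp only [coeff_add, coeff_C_mul] at heq
    have hT1 : coeff (d + Finsupp.single 1 1) (X 0 * X 1 * pderiv 0 f)
        = (d 0 : ℝ) * coeff d f := by
      by_cases hb : d 0 = 0
      · rw [coeff_XX_zero (by decide) _ _ (Or.inl (by simp [Finsupp.single_apply, hb]))]
        simp [hb]
      · rw [show d + Finsupp.single (1:Fin 3) 1
            = (d - Finsupp.single 0 1) + Finsupp.single 0 1 + Finsupp.single 1 1 by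
            ext x; fin_cases x <;> simp [Finsupp.single_apply, Finsupp.tsub_apply] <;> omega,
          coeff_XXp, tsub_add_cancel_of_le (Finsupp.single_le_iff.mpr (by omega))]
        congr 1
        have h1' : (d - Finsupp.single 0 1 : Fin 3 →₀ ℕ) 0 = d 0 - 1 := by
          simp [Finsupp.tsub_apply, Finsupp.single_apply]
        rw [h1']
        have : d 0 - 1 + 1 = d 0 := by omega
        exact_mod_cast congrArg (Nat.cast (R := ℝ)) this
    have hT2 : coeff (d + Finsupp.single 1 1) (X 0 * X 2 * pderiv 0 f) = 0 := by
      by_cases hb : d 0 = 0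
      · exact coeff_XX_zero (by decide) _ _ (Or.inl (by simp [Finsupp.single_apply, hb]))
      · by_cases hb2 : d 2 = 0
        · exact coeff_XX_zero (by decide) _ _ (Or.inr (by simp [Finsupp.single_apply, hb2]))
        · rw [show d + Finsupp.single (1:Fin 3) 1
              = (d - Finsupp.single 0 1 - Finsupp.single 2 1 + Finsupp.single 1 1)
                + Finsupp.single 0 1 + Finsupp.single 2 1 by
              ext x; fin_cases x <;> simp [Finsupp.single_apply, Finsupp.tsub_apply] <;> omega,
            coeff_XXp,
            hz (d - Finsupp.single 0 1 - Finsupp.single 2 1 + Finsupp.single 1 1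
                + Finsupp.single 0 1)
              (by simp [Finsupp.tsub_apply, Finsupp.single_apply] <;> omega), mul_zero]
    have hT3 : coeff (d + Finsupp.single 1 1) (X 0 * X 1 * pderiv 1 f) = 0 := by
      by_cases hb : d 0 = 0
      · exact coeff_XX_zero (by decide) _ _ (Or.inl (by simp [Finsupp.single_apply, hb]))
      · rw [show d + Finsupp.single (1:Fin 3) 1
            = (d - Finsupp.single 0 1) + Finsupp.single 0 1 + Finsupp.single 1 1 by
            ext x; fin_cases x <;> simp [Finsupp.single_apply, Finsupp.tsub_apply] <;> omega,
          coeff_XXp,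
          hz (d - Finsupp.single 0 1 + Finsupp.single 1 1)
            (by simp [Finsupp.tsub_apply, Finsupp.single_apply] <;> omega), mul_zero]
    have hT4 : coeff (d + Finsupp.single 1 1) (X 1 * X 2 * pderiv 1 f) = 0 := by
      by_cases hb2 : d 2 = 0
      · exact coeff_XX_zero (by decide) _ _ (Or.inr (by simp [Finsupp.single_apply, hb2]))
      · rw [show d + Finsupp.single (1:Fin 3) 1
            = (d - Finsupp.single 2 1) + Finsupp.single 1 1 + Finsupp.single 2 1 by
            ext x; fin_cases x <;> simp [Finsupp.single_apply, Finsupp.tsub_apply] <;> omega,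
          coeff_XXp,
          hz (d - Finsupp.single 2 1 + Finsupp.single 1 1)
            (by simp [Finsupp.tsub_apply, Finsupp.single_apply] <;> omega), mul_zero]
    have hT5 : coeff (d + Finsupp.single 1 1) (X 0 * X 2 * pderiv 2 f) = 0 := by
      by_cases hb : d 0 = 0
      · exact coeff_XX_zero (by decide) _ _ (Or.inl (by simp [Finsupp.single_apply, hb]))
      · by_cases hb2 : d 2 = 0
        · exact coeff_XX_zero (by decide) _ _ (Or.inr (by simp [Finsupp.single_apply, hb2]))
        · rw [show d + Finsupp.single (1:Fin 3) 1
              = (d - Finsupp.single 0 1 - Finsupp.single 2 1 + Finsupp.single 1 1)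
                + Finsupp.single 0 1 + Finsupp.single 2 1 by
              ext x; fin_cases x <;> simp [Finsupp.single_apply, Finsupp.tsub_apply] <;> omega,
            coeff_XXp,
            hz (d - Finsupp.single 0 1 - Finsupp.single 2 1 + Finsupp.single 1 1
                + Finsupp.single 2 1)
              (by simp [Finsupp.tsub_apply, Finsupp.single_apply] <;> omega), mul_zero]
    have hT6 : coeff (d + Finsupp.single 1 1) (X 1 * X 2 * pderiv 2 f)
        = (d 2 : ℝ) * coeff d f := by
      by_cases hb : d 2 = 0
      · rw [coeff_XX_zero (by decide) _ _ (Or.inr (by simp [Finsupp.single_apply, hb]))]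
        simp [hb]
      · rw [show d + Finsupp.single (1:Fin 3) 1
            = (d - Finsupp.single 2 1) + Finsupp.single 1 1 + Finsupp.single 2 1 by
            ext x; fin_cases x <;> simp [Finsupp.single_apply, Finsupp.tsub_apply] <;> omega,
          coeff_XXp, tsub_add_cancel_of_le (Finsupp.single_le_iff.mpr (by omega))]
        congr 1
        have h1' : (d - Finsupp.single 2 1 : Fin 3 →₀ ℕ) 2 = d 2 - 1 := by
          simp [Finsupp.tsub_apply, Finsupp.single_apply]
        rw [h1']
        have : d 2 - 1 + 1 = d 2 := by omega
        exact_mod_cast congrArg (Nat.cast (R := ℝ)) this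
    have hR0 : coeff (d + Finsupp.single 1 1) (X 0 * f) = 0 := by
      rw [coeff_X_mul']
      split
      · exact hz _ (by simp [Finsupp.tsub_apply, Finsupp.single_apply] <;> omega)
      · rfl
    have hR1 : coeff (d + Finsupp.single 1 1) (X 1 * f) = coeff d f := by
      rw [add_comm d, coeff_X_mul]
    have hR2 : coeff (d + Finsupp.single 1 1) (X 2 * f) = 0 := by
      rw [coeff_X_mul']
      split
      · exact hz _ (by simp [Finsupp.tsub_apply, Finsupp.single_apply] <;> omega)
      · rfl
    rw [hT1, hT2, hT3, hT4, hT5, hT6, hR0, hR1, hR2] at heq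
    have hβ : β = (d 0 : ℝ) * r - (d 2 : ℝ) * t := by
      apply mul_right_cancel₀ hc
      linear_combination -heq
    by_cases h0 : d 0 = 0 ∧ d 2 = 0
    · left; rw [hβ, h0.1, h0.2]; simp
    · right; exact ⟨d 0, d 2, hβ, by omega, by omega⟩
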